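/- arXiv:1608.02779 — 2 statements merged into one kernel-verified Lean document; each statement's English description precedes it below -/
import Mathlib

section
/- For all α,β ∈ Z_{≥0}^n: Σ_{γ ≤ α} q^{φ(α-γ,β-γ) - φ(α,β) + φ(γ, α+β-γ)} Φ_q(γ|α; λ,μ) = 1. -/
open scoped BigOperators

noncomputable section

/-- The q-Pochhammer symbol `(z;q)_m = ∏_{j=0}^{m-1} (1 - z q^j)`. -/
def qP (q z : ℝ) (m : ℕ) : ℝ := ∏ j ∈ Finset.range m, (1 - z * q ^ j)

/-- The q-binomial coefficient, zero outside `0 ≤ k ≤ m`. -/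
def qBinom (q : ℝ) (m k : ℕ) : ℝ :=
  if k ≤ m then qP q q m / (qP q q k * qP q q (m - k)) else 0

/-- `|α| = α_1 + ⋯ + α_n`. -/
def wt {n : ℕ} (α : Fin n → ℕ) : ℕ := ∑ i, α i

/-- `φ(α,β) = ∑_{i<j} α_i β_j` for integer arrays. -/
def phiZ {n : ℕ} (α β : Fin n → ℤ) : ℤ :=
  ∑ i, ∑ j, if i < j then α i * β j else 0

/-- coercion of a nonnegative-integer array to an integer array -/
def zc {n : ℕ} (α : Fin n → ℕ) : Fin n → ℤ := fun i => (α i : ℤ)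

/-- The weight function `Φ_q(γ|β; λ,μ)`. -/
def Phi {n : ℕ} (q lam mu : ℝ) (γ β : Fin n → ℕ) : ℝ :=
  q ^ (phiZ (zc β - zc γ) (zc γ)) * (mu / lam) ^ wt γ *
    (qP q lam (wt γ) * qP q (mu / lam) (wt β - wt γ) / qP q mu (wt β)) *
    ∏ i, qBinom q (β i) (γ i)

variable {q : ℝ}

lemma qP_zero (z : ℝ) : qP q z 0 = 1 := Finset.prod_range_zero _

lemma qP_succ (z : ℝ) (m : ℕ) : qP q z (m+1) = qP q z m * (1 - z * q ^ m) :=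
  Finset.prod_range_succ _ _

lemma qP_q_pos (hq0 : 0 < q) (hq1 : q < 1) (m : ℕ) : 0 < qP q q m := by
  refine Finset.prod_pos fun j _ => ?_
  have h : q * q ^ j < 1 := by
    have := pow_lt_one₀ hq0.le hq1 (Nat.succ_ne_zero j)
    rwa [pow_succ'] at this
  linarith

lemma qP_q_ne (hq0 : 0 < q) (hq1 : q < 1) (m : ℕ) : qP q q m ≠ 0 :=
  (qP_q_pos hq0 hq1 m).ne'

lemma qBinom_zero (hq0 : 0 < q) (hq1 : q < 1) (m : ℕ) : qBinom q m 0 = 1 := by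
  simp [qBinom, qP_zero, div_self (qP_q_ne hq0 hq1 m)]

lemma qBinom_self (hq0 : 0 < q) (hq1 : q < 1) (m : ℕ) : qBinom q m m = 1 := by
  simp [qBinom, qP_zero, div_self (qP_q_ne hq0 hq1 m)]

lemma qBinom_eq_zero {m k : ℕ} (h : m < k) : qBinom q m k = 0 := if_neg (by omega)

lemma qBinom_pascal (hq0 : 0 < q) (hq1 : q < 1) (m k : ℕ) :
    qBinom q (m+1) (k+1) = qBinom q m (k+1) + q ^ (m-k) * qBinom q m k := by
  rcases lt_or_ge m k with h | h
  · rw [qBinom_eq_zero (by omega), qBinom_eq_zero (by omega), qBinom_eq_zero h]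
    ring
  · rcases eq_or_lt_of_le h with rfl | hlt
    · rw [qBinom_self hq0 hq1, qBinom_self hq0 hq1, qBinom_eq_zero (by omega)]
      simp
    · obtain ⟨d, rfl⟩ : ∃ d, m = k + (d+1) := ⟨m - k - 1, by omega⟩
      have h1 : k + (d+1) + 1 - (k+1) = d + 1 := by omega
      have h2 : k + (d+1) - (k+1) = d := by omega
      have h3 : k + (d+1) - k = d + 1 := by omega
      have h4 : k + (d+1) - k = d + 1 := by omega
      rw [qBinom, qBinom, qBinom, if_pos (by omega), if_pos (by omega), if_pos (by omega),
        h1, h2, h3]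
      have e1 : qP q q (k + (d+1) + 1) = qP q q (k+(d+1)) * (1 - q * q ^ (k+(d+1))) :=
        qP_succ _ _
      have e2 : qP q q (d+1) = qP q q d * (1 - q * q ^ d) := qP_succ _ _
      have e3 : qP q q (k+1) = qP q q k * (1 - q * q ^ k) := qP_succ _ _
      have nk := qP_q_ne hq0 hq1 k
      have nd := qP_q_ne hq0 hq1 d
      have nk1 : (1 - q * q ^ k) ≠ 0 := by
        have := pow_lt_one₀ hq0.le hq1 (Nat.succ_ne_zero k)
        rw [pow_succ'] at this; intro hc; linarith [this]
      have nd1 : (1 - q * q ^ d) ≠ 0 := by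
        have := pow_lt_one₀ hq0.le hq1 (Nat.succ_ne_zero d)
        rw [pow_succ'] at this; intro hc; linarith [this]
      rw [e1, e2, e3]
      field_simp
      ring

lemma qVander (hq0 : 0 < q) (hq1 : q < 1) (a x : ℝ) (N : ℕ) :
    ∑ k ∈ Finset.range (N+1), qBinom q N k * x ^ k * qP q a k * qP q x (N-k)
      = qP q (a*x) N := by
  induction N with
  | zero => simp [qBinom_zero hq0 hq1, qP_zero]
  | succ N ih =>
    rw [Finset.sum_range_succ' _ (N+1)]
    have f0 : qBinom q (N+1) 0 * x ^ 0 * qP q a 0 * qP q x (N+1-0) = qP q x (N+1) := by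
      rw [qBinom_zero hq0 hq1]; simp [qP_zero]
    rw [f0]
    have key : ∀ k ∈ Finset.range (N+1),
        qBinom q (N+1) (k+1) * x ^ (k+1) * qP q a (k+1) * qP q x (N+1-(k+1))
        = (qBinom q N (k+1) * x ^ (k+1) * qP q a (k+1) * qP q x (N+1-(k+1)))
          + (qBinom q N k * x ^ k * qP q a k * qP q x (N-k))
              * (x * q ^ (N-k) * (1 - a * q ^ k)) := by
      intro k hk
      rw [qBinom_pascal hq0 hq1]
      have h1 : N + 1 - (k+1) = N - k := by omega
      rw [h1, qP_succ a k]
      ring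
    rw [Finset.sum_congr rfl key, Finset.sum_add_distrib]
    have hA : (∑ k ∈ Finset.range (N+1),
        qBinom q N (k+1) * x ^ (k+1) * qP q a (k+1) * qP q x (N+1-(k+1))) + qP q x (N+1)
        = ∑ k ∈ Finset.range (N+1),
            (qBinom q N k * x ^ k * qP q a k * qP q x (N-k)) * (1 - x * q ^ (N-k)) := by
      have e0 : qP q x (N+1) = qBinom q N 0 * x ^ 0 * qP q a 0 * qP q x (N+1-0) := by
        rw [qBinom_zero hq0 hq1]; simp [qP_zero]
      rw [e0, ← Finset.sum_range_succ' (fun k => qBinom q N k * x ^ k * qP q a k * qP q x (N+1-k)) (N+1)]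
      rw [Finset.sum_range_succ]
      rw [qBinom_eq_zero (by omega : N < N+1)]
      simp only [zero_mul, mul_zero, zero_mul, add_zero]
      refine Finset.sum_congr rfl fun k hk => ?_
      have hk' : k ≤ N := by simpa [Nat.lt_succ_iff] using hk
      have h2 : N + 1 - k = (N - k) + 1 := by omega
      rw [h2, qP_succ x (N-k)]
      ring
    rw [add_right_comm, hA, ← Finset.sum_add_distrib]
    have : ∀ k ∈ Finset.range (N+1),
        (qBinom q N k * x ^ k * qP q a k * qP q x (N-k)) * (1 - x * q ^ (N-k))
        + (qBinom q N k * x ^ k * qP q a k * qP q x (N-k)) * (x * q ^ (N-k) * (1 - a * q ^ k))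
        = (qBinom q N k * x ^ k * qP q a k * qP q x (N-k)) * (1 - a * x * q ^ N) := by
      intro k hk
      have hk' : k ≤ N := by simpa [Nat.lt_succ_iff] using hk
      have hpow : q ^ (N-k) * q ^ k = q ^ N := by
        rw [← pow_add]; congr 1; omega
      have : (1 - x * q ^ (N-k)) + (x * q ^ (N-k) * (1 - a * q ^ k)) = 1 - a * x * q ^ N := by
        have : x * q ^ (N-k) * (a * q ^ k) = a * x * q ^ N := by
          rw [← hpow]; ring
        linarith [this]
      rw [← mul_add, this]
    rw [Finset.sum_congr rfl this, ← Finset.sum_mul, ih, qP_succ]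

lemma shift_sum (g : ℕ → ℝ) (M : ℕ) (hM : g (M+1) = 0) :
    ∑ k ∈ Finset.range (M+1), g (k+1) + g 0 = ∑ k ∈ Finset.range (M+1), g k := by
  rw [← Finset.sum_range_succ' g (M+1), Finset.sum_range_succ, hM, add_zero]

lemma pascal_sum (hq0 : 0 < q) (hq1 : q < 1) (M : ℕ) (D : ℕ → ℝ) :
    ∑ k ∈ Finset.range (M+1+1), qBinom q (M+1) k * D k
      = ∑ k ∈ Finset.range (M+1), qBinom q M k * D k
        + ∑ k ∈ Finset.range (M+1), qBinom q M k * (q ^ (M-k) * D (k+1)) := by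
  rw [Finset.sum_range_succ' (fun k => qBinom q (M+1) k * D k) (M+1)]
  have key : ∀ k ∈ Finset.range (M+1), qBinom q (M+1) (k+1) * D (k+1)
      = qBinom q M (k+1) * D (k+1) + qBinom q M k * (q ^ (M-k) * D (k+1)) := by
    intro k _
    rw [qBinom_pascal hq0 hq1]
    ring
  rw [Finset.sum_congr rfl key, Finset.sum_add_distrib]
  have h0 : qBinom q (M+1) 0 * D 0 = qBinom q M 0 * D 0 := by
    rw [qBinom_zero hq0 hq1, qBinom_zero hq0 hq1]
  rw [add_right_comm, h0,
    shift_sum (fun k => qBinom q M k * D k) M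
      (by show qBinom q M (M+1) * D (M+1) = 0
          rw [qBinom_eq_zero (by omega : M < M+1)]; ring)]

lemma qVD (hq0 : 0 < q) (hq1 : q < 1) (b : ℕ) : ∀ (a : ℕ) (C : ℕ → ℝ),
    ∑ c ∈ Finset.range (a+1), qBinom q a c *
      (∑ k ∈ Finset.range (b+1), qBinom q b k * q ^ (c*(b-k)) * C (c+k))
    = ∑ k ∈ Finset.range (a+b+1), qBinom q (a+b) k * C k := by
  intro a
  induction a with
  | zero =>
    intro C
    simp [Finset.sum_range_one, qBinom_zero hq0 hq1]
  | succ a ih =>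
    intro C
    rw [pascal_sum hq0 hq1 a
      (fun c => ∑ k ∈ Finset.range (b+1), qBinom q b k * q ^ (c*(b-k)) * C (c+k)), ih C]
    have hH : ∀ c ∈ Finset.range (a+1),
        qBinom q a c * (q ^ (a-c) *
          ∑ k ∈ Finset.range (b+1), qBinom q b k * q ^ ((c+1)*(b-k)) * C (c+1+k))
        = qBinom q a c *
          (∑ k ∈ Finset.range (b+1), qBinom q b k * q ^ (c*(b-k)) *
            (q ^ (a+b-(c+k)) * C ((c+k)+1))) := by
      intro c hc
      have hc' : c ≤ a := by simpa [Nat.lt_succ_iff] using hc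
      congr 1
      rw [Finset.mul_sum]
      refine Finset.sum_congr rfl fun k hk => ?_
      have hk' : k ≤ b := by simpa [Nat.lt_succ_iff] using hk
      have hexp : q ^ (a-c) * q ^ ((c+1)*(b-k)) = q ^ (c*(b-k)) * q ^ (a+b-(c+k)) := by
        rw [← pow_add, ← pow_add]
        congr 1
        have h : (c + 1) * (b - k) = c * (b - k) + (b - k) := by ring
        rw [h]
        generalize c * (b - k) = m
        omega
      have hidx : c+1+k = (c+k)+1 := by omega
      rw [hidx, show q ^ (a-c) * (qBinom q b k * q ^ ((c+1)*(b-k)) * C ((c+k)+1))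
        = (q ^ (a-c) * q ^ ((c+1)*(b-k))) * (qBinom q b k * C ((c+k)+1)) from by ring, hexp]
      ring
    rw [Finset.sum_congr rfl hH, ih (fun m => q ^ (a+b-m) * C (m+1))]
    have hab : a+1+b = a+b+1 := by omega
    rw [hab, pascal_sum hq0 hq1 (a+b) C]

def phiN {n : ℕ} (a b : Fin n → ℕ) : ℕ := ∑ i, ∑ j, if i < j then a i * b j else 0

lemma phiN_cons {n : ℕ} (c : ℕ) (a : Fin n → ℕ) (B : Fin (n+1) → ℕ) :
    phiN (Fin.cons c a) B = c * (∑ j : Fin n, B j.succ) + phiN a (fun j => B j.succ) := by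
  simp [phiN, Fin.sum_univ_succ, Fin.cons_zero, Fin.cons_succ, Fin.succ_pos,
    Fin.succ_lt_succ_iff, Finset.mul_sum]

lemma Iic_pi {n : ℕ} (α : Fin n → ℕ) :
    Finset.Iic α = Fintype.piFinset (fun i => Finset.Iic (α i)) := by
  ext γ
  simp [Fintype.mem_piFinset, Pi.le_def]

lemma sum_piFinset_succ {n : ℕ} (t : ∀ _ : Fin (n+1), Finset ℕ)
    (f : (Fin (n+1) → ℕ) → ℝ) :
    ∑ x ∈ Fintype.piFinset t, f x
      = ∑ p ∈ (t 0) ×ˢ (Fintype.piFinset (fun i : Fin n => t i.succ)),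
          f (Fin.cons p.1 p.2) := by
  refine Finset.sum_nbij' (fun x => (x 0, Fin.tail x)) (fun p => Fin.cons p.1 p.2)
    ?_ ?_ ?_ ?_ ?_
  · intro x hx
    simp only [Fintype.mem_piFinset] at hx
    simp [Finset.mem_product, Fintype.mem_piFinset, Fin.tail, hx]
  · intro p hp
    simp only [Finset.mem_product, Fintype.mem_piFinset] at hp
    simp only [Fintype.mem_piFinset]
    intro i
    refine Fin.cases ?_ ?_ i
    · simpa using hp.1
    · intro j; simpa using hp.2 j
  · intro x _
    exact Fin.cons_self_tail x
  · intro p _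
    simp [Fin.tail_cons]
  · intro x _
    rw [Fin.cons_self_tail]

lemma Nat_Iic_range (m : ℕ) : Finset.Iic m = Finset.range (m+1) := by
  ext x; simp [Nat.lt_succ_iff]

lemma Msum (hq0 : 0 < q) (hq1 : q < 1) :
    ∀ (n : ℕ) (α : Fin n → ℕ) (C : ℕ → ℝ),
    ∑ γ ∈ Finset.Iic α, q ^ phiN γ (α - γ) * (∏ i, qBinom q (α i) (γ i)) * C (wt γ)
      = ∑ k ∈ Finset.range (wt α + 1), qBinom q (wt α) k * C k := by
  intro n
  induction n with
  | zero =>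
    intro α C
    have h : Finset.Iic α = {α} := by
      ext γ
      simp only [Finset.mem_Iic, Finset.mem_singleton]
      constructor
      · intro _; funext i; exact i.elim0
      · rintro rfl; exact le_refl _
    have hwt : wt α = 0 := by simp [wt]
    rw [h, Finset.sum_singleton, hwt]
    simp [phiN, qBinom_zero hq0 hq1]
  | succ n ih =>
    intro α C
    set α' : Fin n → ℕ := fun i => α i.succ with hα'
    have hwtα : wt α = α 0 + wt α' := by simp [wt, Fin.sum_univ_succ]; rfl
    rw [Iic_pi, sum_piFinset_succ, Finset.sum_product]
    have hpi : (Fintype.piFinset fun i : Fin n => Finset.Iic (α i.succ)) = Finset.Iic α' :=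
      (Iic_pi α').symm
    rw [hpi]
    have inner : ∀ c ∈ Finset.Iic (α 0),
        (∑ y ∈ Finset.Iic α',
          q ^ phiN ((Fin.cons c y : Fin (n+1) → ℕ)) (α - (Fin.cons c y : Fin (n+1) → ℕ)) *
            (∏ i, qBinom q (α i) ((Fin.cons c y : Fin (n+1) → ℕ) i)) * C (wt ((Fin.cons c y : Fin (n+1) → ℕ))))
        = qBinom q (α 0) c *
            (∑ k ∈ Finset.range (wt α' + 1),
              qBinom q (wt α') k * q ^ (c*(wt α' - k)) * C (c+k)) := by
      intro c hc
      have hstep : ∀ y ∈ Finset.Iic α',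
          q ^ phiN ((Fin.cons c y : Fin (n+1) → ℕ)) (α - (Fin.cons c y : Fin (n+1) → ℕ)) *
            (∏ i, qBinom q (α i) ((Fin.cons c y : Fin (n+1) → ℕ) i)) * C (wt ((Fin.cons c y : Fin (n+1) → ℕ)))
          = qBinom q (α 0) c *
              (q ^ phiN y (α' - y) * (∏ i, qBinom q (α' i) (y i)) *
                (q ^ (c*(wt α' - wt y)) * C (c + wt y))) := by
        intro y hy
        have hy' : y ≤ α' := Finset.mem_Iic.mp hy
        have h1 : phiN ((Fin.cons c y : Fin (n+1) → ℕ)) (α - (Fin.cons c y : Fin (n+1) → ℕ))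
            = c * (wt α' - wt y) + phiN y (α' - y) := by
          rw [phiN_cons]
          congr 1
          · congr 1
            have : ∀ j : Fin n, (α - (Fin.cons c y : Fin (n+1) → ℕ)) j.succ = α' j - y j := by
              intro j; simp [Pi.sub_apply, Fin.cons_succ]; rfl
            rw [Finset.sum_congr rfl (fun j _ => this j)]
            rw [Finset.sum_tsub_distrib _ (fun j _ => hy' j)]
            rfl
        have h2 : (∏ i, qBinom q (α i) ((Fin.cons c y : Fin (n+1) → ℕ) i))
            = qBinom q (α 0) c * ∏ i, qBinom q (α' i) (y i) := by
          rw [Fin.prod_univ_succ]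
          simp [Fin.cons_zero, Fin.cons_succ]
          exact Or.inl rfl
        have h3 : wt ((Fin.cons c y : Fin (n+1) → ℕ)) = c + wt y := by
          simp [wt, Fin.sum_univ_succ]
        rw [h1, h2, h3, pow_add]
        ring
      rw [Finset.sum_congr rfl hstep, ← Finset.mul_sum,
        ih α' (fun k => q ^ (c*(wt α' - k)) * C (c+k))]
      congr 1
      exact Finset.sum_congr rfl fun k _ => (mul_assoc _ _ _).symm
    rw [Finset.sum_congr rfl inner, hwtα, Nat_Iic_range,
      qVD hq0 hq1 (wt α') (α 0) C]

lemma phiZ_sub_left {n : ℕ} (A G B : Fin n → ℤ) :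
    phiZ (A - G) B = phiZ A B - phiZ G B := by
  simp only [phiZ, Pi.sub_apply, ← Finset.sum_sub_distrib]
  refine Finset.sum_congr rfl fun i _ => Finset.sum_congr rfl fun j _ => ?_
  split_ifs <;> ring

lemma phiZ_sub_right {n : ℕ} (A B G : Fin n → ℤ) :
    phiZ A (B - G) = phiZ A B - phiZ A G := by
  simp only [phiZ, Pi.sub_apply, ← Finset.sum_sub_distrib]
  refine Finset.sum_congr rfl fun i _ => Finset.sum_congr rfl fun j _ => ?_
  split_ifs <;> ring

lemma phiZ_add_right {n : ℕ} (A B G : Fin n → ℤ) :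
    phiZ A (B + G) = phiZ A B + phiZ A G := by
  simp only [phiZ, Pi.add_apply, ← Finset.sum_add_distrib]
  refine Finset.sum_congr rfl fun i _ => Finset.sum_congr rfl fun j _ => ?_
  split_ifs <;> ring

lemma phiZ_key {n : ℕ} (A B G : Fin n → ℤ) :
    (phiZ (A-G) (B-G) - phiZ A B + phiZ G (A+B-G)) + phiZ (A-G) G
      = phiZ G (A-G) := by
  simp only [phiZ_sub_left, phiZ_sub_right, phiZ_add_right]
  ring

lemma phiZ_cast {n : ℕ} (γ α : Fin n → ℕ) (h : γ ≤ α) :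
    phiZ (zc γ) (zc α - zc γ) = (phiN γ (α - γ) : ℤ) := by
  simp only [phiZ, phiN, zc, Pi.sub_apply, Nat.cast_sum]
  refine Finset.sum_congr rfl fun i _ => Finset.sum_congr rfl fun j _ => ?_
  rw [apply_ite (fun m : ℕ => (m : ℤ))]
  split_ifs
  · push_cast [Nat.cast_sub (h j)]; ring
  · simp


/-- Consistency condition for the trivial representation of the ZF algebra:
`∑_{γ ≤ α} q^{φ(α-γ,β-γ) - φ(α,β) + φ(γ,α+β-γ)} Φ_q(γ|α;λ,μ) = 1`. -/
theorem trivial_rep_consistency {n : ℕ} (q lam mu : ℝ) (hq0 : 0 < q)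
    (hq1 : q < 1) (hlam : lam ≠ 0) (α β : Fin n → ℕ)
    (hmu : qP q mu (wt α) ≠ 0) :
    ∑ γ ∈ Finset.Iic α,
      q ^ (phiZ (zc α - zc γ) (zc β - zc γ) - phiZ (zc α) (zc β)
            + phiZ (zc γ) (zc α + zc β - zc γ)) * Phi q lam mu γ α = 1 := by
  have hq := hq0.ne'
  set C : ℕ → ℝ :=
    fun k => (mu/lam)^k * (qP q lam k * qP q (mu/lam) (wt α - k) / qP q mu (wt α))
    with hC
  have step : ∀ γ ∈ Finset.Iic α,
      q ^ (phiZ (zc α - zc γ) (zc β - zc γ) - phiZ (zc α) (zc β)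
            + phiZ (zc γ) (zc α + zc β - zc γ)) * Phi q lam mu γ α
      = q ^ phiN γ (α - γ) * (∏ i, qBinom q (α i) (γ i)) * C (wt γ) := by
    intro γ hγ
    have hle : γ ≤ α := Finset.mem_Iic.mp hγ
    have e : q ^ (phiZ (zc α - zc γ) (zc β - zc γ) - phiZ (zc α) (zc β)
            + phiZ (zc γ) (zc α + zc β - zc γ)) * Phi q lam mu γ α
        = (q ^ (phiZ (zc α - zc γ) (zc β - zc γ) - phiZ (zc α) (zc β)
            + phiZ (zc γ) (zc α + zc β - zc γ)) * q ^ (phiZ (zc α - zc γ) (zc γ)))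
          * ((∏ i, qBinom q (α i) (γ i)) * C (wt γ)) := by
      rw [Phi, hC]
      ring
    rw [e, ← zpow_add₀ hq, phiZ_key (zc α) (zc β) (zc γ), phiZ_cast γ α hle,
      zpow_natCast]
    ring
  rw [Finset.sum_congr rfl step, Msum hq0 hq1 n α C]
  have e2 : ∑ k ∈ Finset.range (wt α + 1), qBinom q (wt α) k * C k
      = (∑ k ∈ Finset.range (wt α + 1),
          qBinom q (wt α) k * (mu/lam)^k * qP q lam k * qP q (mu/lam) (wt α - k))
        / qP q mu (wt α) := by
    rw [Finset.sum_div]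
    refine Finset.sum_congr rfl fun k _ => ?_
    rw [hC]
    ring
  rw [e2, qVander hq0 hq1 lam (mu/lam) (wt α),
    show lam * (mu/lam) = mu from by field_simp]
  exact div_self hmu
end
end

section
/- In the q-boson algebra, the commutator identity [b_-, (η b_+;q)_∞/(ζ b_+;q)_∞] = (ζ-η)·((qη b_+;q)_∞/(ζ b_+;q)_∞)·k holds, where the infinite product ratio is defined by its series expansion. -/
open scoped BigOperators

noncomputable section

/-- The Fock space `F = ⊕_{m≥0} ℂ|m⟩`, realized as coefficient sequences:
`v : ℕ → ℝ` stands for the vector `∑_m v m · |m⟩`. -/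
abbrev Fock : Type := ℕ → ℝ

/-- The creation operator `b₊`, with `b₊|m⟩ = |m+1⟩`. -/
def Bp : Module.End ℝ Fock where
  toFun v := fun i => if i = 0 then 0 else v (i - 1)
  map_add' x y := by funext i; by_cases h : i = 0 <;> simp [h]
  map_smul' c x := by funext i; by_cases h : i = 0 <;> simp [h]

/-- The annihilation operator `b₋`, with `b₋|m⟩ = (1-q^m)|m-1⟩`. -/
def Bm (q : ℝ) : Module.End ℝ Fock where
  toFun v := fun i => (1 - q ^ (i + 1)) * v (i + 1)
  map_add' x y := by funext i; simp [mul_add]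
  map_smul' c x := by funext i; simp; ring

/-- The operator `k`, with `k|m⟩ = q^m|m⟩`. -/
def Kop (q : ℝ) : Module.End ℝ Fock where
  toFun v := fun i => q ^ i * v i
  map_add' x y := by funext i; simp [mul_add]
  map_smul' c x := by funext i; simp; ring

/-- The basis vector `|m⟩`. -/
def fock (m : ℕ) : Fock := fun i => if i = m then 1 else 0

/-- The trace `Tr(X) = ∑_{m≥0} ⟨m|X|m⟩/(q;q)_m`, with pairing
`⟨m|m'⟩ = δ_{m,m'}(q;q)_m`; equivalently the sum of diagonal coefficients. -/
def Tr (X : Module.End ℝ Fock) : ℝ := ∑' m : ℕ, X (fock m) m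

/-- Series coefficient of the ratio of infinite products
`(η b₊;q)_∞/(ζ b₊;q)_∞ = ∑_j ((η/ζ;q)_j/(q;q)_j)(ζ b₊)^j`:
the coefficient of `b₊^j` is `(∏_{t<j}(ζ - η q^t))/(q;q)_j`. -/
def ratioCoeff (q η ζ : ℝ) (j : ℕ) : ℝ :=
  (∏ t ∈ Finset.range j, (ζ - η * q ^ t)) / qP q q j

/-- The operator `(η b₊;q)_∞/(ζ b₊;q)_∞ = ∑_j ratioCoeff j · b₊^j`,
a well-defined linear operator on the Fock space since `b₊` raises degree. -/
def Ratio (q η ζ : ℝ) : Module.End ℝ Fock where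
  toFun v := fun i => ∑ j ∈ Finset.range (i + 1), ratioCoeff q η ζ j * v (i - j)
  map_add' x y := by
    funext i
    simp only [Pi.add_apply, mul_add, Finset.sum_add_distrib]
  map_smul' c x := by
    funext i
    simp only [Pi.smul_apply, smul_eq_mul, RingHom.id_apply, Finset.mul_sum]
    exact Finset.sum_congr rfl fun j _ => by ring


lemma qP_ne (q : ℝ) (hq0 : 0 < q) (hq1 : q < 1) (j : ℕ) : qP q q j ≠ 0 := by
  refine ne_of_gt (Finset.prod_pos fun t _ => ?_)
  have h : q * q ^ t < 1 := by
    have h1 : q ^ t ≤ 1 := pow_le_one₀ hq0.le hq1.le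
    nlinarith
  linarith

lemma key (q η ζ : ℝ) (hq0 : 0 < q) (hq1 : q < 1) (j : ℕ) :
    (1 - q ^ (j + 1)) * ratioCoeff q η ζ (j + 1)
      = (ζ - η) * ratioCoeff q (q * η) ζ j := by
  have hj := qP_ne q hq0 hq1 j
  have hj1 := qP_ne q hq0 hq1 (j + 1)
  have hnum : ∏ t ∈ Finset.range (j + 1), (ζ - η * q ^ t)
      = (∏ t ∈ Finset.range j, (ζ - q * η * q ^ t)) * (ζ - η) := by
    rw [Finset.prod_range_succ']
    congr 1
    · exact Finset.prod_congr rfl fun t _ => by ring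
    · ring_nf
  have hden : qP q q (j + 1) = qP q q j * (1 - q ^ (j + 1)) := by
    rw [qP, Finset.prod_range_succ, ← qP]; ring_nf
  simp only [ratioCoeff, hnum, hden]
  rw [hden] at hj1
  have hq' : (1 : ℝ) - q ^ (j + 1) ≠ 0 := by
    intro h; rw [h, mul_zero] at hj1; exact hj1 rfl
  field_simp

/-- The commutator identity
`[b₋, (η b₊;q)_∞/(ζ b₊;q)_∞] = (ζ-η) (qη b₊;q)_∞/(ζ b₊;q)_∞ · k`. -/
theorem bm_ratio_comm (q η ζ : ℝ) (hq0 : 0 < q) (hq1 : q < 1) :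
    Bm q * Ratio q η ζ - Ratio q η ζ * Bm q
      = (ζ - η) • (Ratio q (q * η) ζ * Kop q) := by
  apply LinearMap.ext; intro v
  funext i
  have hL : ((Bm q * Ratio q η ζ - Ratio q η ζ * Bm q) v) i
      = (1 - q ^ (i + 1)) * ∑ j ∈ Finset.range (i + 2), ratioCoeff q η ζ j * v (i + 1 - j)
        - ∑ j ∈ Finset.range (i + 1), ratioCoeff q η ζ j * ((1 - q ^ (i - j + 1)) * v (i - j + 1)) := by
    simp [Bm, Ratio, Module.End.mul_apply]
  have hR : (((ζ - η) • (Ratio q (q * η) ζ * Kop q)) v) i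
      = (ζ - η) * ∑ j ∈ Finset.range (i + 1), ratioCoeff q (q * η) ζ j * (q ^ (i - j) * v (i - j)) := by
    simp [Ratio, Kop, Module.End.mul_apply]
  rw [hL, hR]
  rw [Finset.sum_range_succ (fun j => ratioCoeff q η ζ j * v (i + 1 - j)) (i + 1)]
  rw [mul_add, Finset.mul_sum, add_sub_right_comm, ← Finset.sum_sub_distrib]
  have hcong : ∑ j ∈ Finset.range (i + 1),
      ((1 - q ^ (i + 1)) * (ratioCoeff q η ζ j * v (i + 1 - j))
        - ratioCoeff q η ζ j * ((1 - q ^ (i - j + 1)) * v (i - j + 1)))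
      = ∑ j ∈ Finset.range (i + 1),
          q ^ (i + 1 - j) * ((1 - q ^ j) * ratioCoeff q η ζ j) * v (i + 1 - j) := by
    refine Finset.sum_congr rfl fun j hj => ?_
    have hji : j ≤ i := Nat.lt_succ_iff.mp (Finset.mem_range.mp hj)
    have h1 : i - j + 1 = i + 1 - j := by omega
    have h2 : q ^ (i + 1 - j) * q ^ j = q ^ (i + 1) := by
      rw [← pow_add]; congr 1; omega
    rw [h1]
    linear_combination ratioCoeff q η ζ j * v (i + 1 - j) * h2
  rw [hcong]
  rw [Finset.sum_range_succ' (fun j => q ^ (i + 1 - j) * ((1 - q ^ j) * ratioCoeff q η ζ j) * v (i + 1 - j)) i]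
  rw [Finset.mul_sum, Finset.sum_range_succ (fun j => (ζ - η) * (ratioCoeff q (q * η) ζ j * (q ^ (i - j) * v (i - j)))) i]
  have hz : q ^ (i + 1 - 0) * ((1 - q ^ 0) * ratioCoeff q η ζ 0) * v (i + 1 - 0) = 0 := by
    simp
  rw [hz, add_zero]
  congr 1
  · refine Finset.sum_congr rfl fun j hj => ?_
    have hji : j < i := Finset.mem_range.mp hj
    have h1 : i + 1 - (j + 1) = i - j := by omega
    have hk := key q η ζ hq0 hq1 j
    rw [h1]
    linear_combination q ^ (i - j) * v (i - j) * hk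
  · have hk := key q η ζ hq0 hq1 i
    simp only [Nat.sub_self, pow_zero]
    linear_combination v 0 * hk
end
end
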